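/- Let t ≥ 3, k ≥ 2, q ≥ 1 be integers and set b := ⌊(t−3)/(k−1)⌋, assuming b ≥ 2. Every graph of the form (P_t)_R^q, where R ⊊ V(P_t) and P_t − R has at least k+1 connected components, contains a theta graph θ_{q,b'} as a subgraph for some integer b' with 2 ≤ b' ≤ b. -/

import Mathlib

open SimpleGraph

/-- The projection from the vertex set of the blowup `H_R^m` back to `V(H)`. -/
def blowupProj {α : Type*} (R : Set α) (m : ℕ) : (↥R ⊕ (Fin m × ↥Rᶜ)) → α :=
  Sum.elim Subtype.val (fun p => p.2.val)

/-- Whether a vertex of `H_R^m` belongs to the `i`-th copy of `H`. -/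
def blowupInCopy {α : Type*} (R : Set α) (m : ℕ) (i : Fin m) : (↥R ⊕ (Fin m × ↥Rᶜ)) → Prop :=
  Sum.elim (fun _ => True) (fun p => p.1 = i)

/-- The graph `H_R^m`: the union of `m` copies of `H` which agree on `R` and are
otherwise pairwise disjoint. -/
def blowupGraph {α : Type*} (H : SimpleGraph α) (R : Set α) (m : ℕ) :
    SimpleGraph (↥R ⊕ (Fin m × ↥Rᶜ)) where
  Adj a b := ∃ i : Fin m, blowupInCopy R m i a ∧ blowupInCopy R m i b ∧
    H.Adj (blowupProj R m a) (blowupProj R m b)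
  symm := by
    refine ⟨?_⟩
    rintro a b ⟨i, ha, hb, hadj⟩
    exact ⟨i, hb, ha, hadj.symm⟩
  loopless := by
    refine ⟨?_⟩
    rintro a ⟨i, -, -, hadj⟩
    exact H.irrefl hadj

/-- `G` contains a copy of `H_R^q`: there are `q` monomorphisms of `H` into `G` which
agree precisely on `R` and have otherwise pairwise disjoint images. -/
def ContainsBlowup {α β : Type*} (H : SimpleGraph α) (R : Set α) (q : ℕ)
    (G : SimpleGraph β) : Prop :=
  ∃ φ : Fin q → (H →g G),
    ∀ i j : Fin q, ∀ x y : α, (φ i) x = (φ j) y ↔ x = y ∧ (i = j ∨ x ∈ R)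

variable {t : ℕ} {R : Set (Fin t)}

lemma induce_adj_iff {a b : ↥Rᶜ} :
    ((pathGraph t).induce Rᶜ).Adj a b ↔ (a.1.1 + 1 = b.1.1 ∨ b.1.1 + 1 = a.1.1) := by
  constructor
  · intro h
    have : (pathGraph t).Adj a.1 b.1 := h
    rwa [pathGraph_adj] at this
  · intro h
    show (pathGraph t).Adj a.1 b.1
    rwa [pathGraph_adj]

/-- A walk in the induced graph covers the whole interval between its ends,
within the same component. -/
lemma walk_covers {u v : ↥Rᶜ} (p : ((pathGraph t).induce Rᶜ).Walk u v) :
    ∀ w : ℕ, min u.1.1 v.1.1 ≤ w → w ≤ max u.1.1 v.1.1 →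
      ∃ x : ↥Rᶜ, x.1.1 = w ∧ ((pathGraph t).induce Rᶜ).Reachable u x := by
  induction p with
  | nil =>
    intro w h1 h2
    refine ⟨_, ?_, Reachable.refl _⟩
    omega
  | @cons a b c hadj p ih =>
    intro w h1 h2
    rw [induce_adj_iff] at hadj
    by_cases hw : min b.1.1 c.1.1 ≤ w ∧ w ≤ max b.1.1 c.1.1
    · obtain ⟨x, hx, hr⟩ := ih w hw.1 hw.2
      exact ⟨x, hx, (Adj.reachable (by rw [induce_adj_iff]; exact hadj)).trans hr⟩
    · have : w = a.1.1 := by omega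
      exact ⟨a, this.symm, Reachable.refl a⟩

/-- If a whole interval avoids `R`, its two ends are connected in the induced graph. -/
lemma interval_reachable :
    ∀ (n : ℕ) (u v : ↥Rᶜ), v.1.1 = u.1.1 + n →
      (∀ w : Fin t, u.1.1 ≤ w.1 → w.1 ≤ v.1.1 → w ∈ Rᶜ) →
      ((pathGraph t).induce Rᶜ).Reachable u v := by
  intro n
  induction n with
  | zero =>
    intro u v h _
    have : u = v := Subtype.ext (Fin.ext (by omega))
    exact this ▸ Reachable.refl u
  | succ n ih =>
    intro u v h hint
    have hlt : u.1.1 + 1 < t := by have := v.1.isLt; omega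
    have hmem : (⟨u.1.1 + 1, hlt⟩ : Fin t) ∈ Rᶜ := hint _ (by simp) (by show u.1.1 + 1 ≤ v.1.1; omega)
    set u' : ↥Rᶜ := ⟨⟨u.1.1 + 1, hlt⟩, hmem⟩
    have hadj : ((pathGraph t).induce Rᶜ).Adj u u' := by
      rw [induce_adj_iff]; left; rfl
    have : ((pathGraph t).induce Rᶜ).Reachable u' v := by
      apply ih u' v (by simp [u']; omega)
      intro w hw1 hw2
      exact hint w (by simp [u'] at hw1; omega) hw2
    exact hadj.reachable.trans this

lemma exists_gap (t k : ℕ) (hk : 2 ≤ k) (hbb : 2 ≤ (t - 3) / (k - 1))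
    (R : Set (Fin t))
    (hcomp : k + 1 ≤ Nat.card ((pathGraph t).induce Rᶜ).ConnectedComponent) :
    ∃ (b' : ℕ) (a c : Fin t), 2 ≤ b' ∧ b' ≤ (t - 3) / (k - 1) ∧ a.val + b' = c.val ∧
      a ∈ R ∧ c ∈ R ∧ ∀ w : Fin t, a.val < w.val → w.val < c.val → w ∉ R := by
  classical
  set b := (t - 3) / (k - 1) with hbdef
  haveI : Fintype ↥Rᶜ := (Set.toFinite Rᶜ).fintype
  haveI : Fintype ((pathGraph t).induce Rᶜ).ConnectedComponent :=
    @Quotient.fintype _ _ ((pathGraph t).induce Rᶜ).reachableSetoid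
      (fun _ _ => Classical.dec _)
  rw [Nat.card_eq_fintype_card] at hcomp
  have hle_iff : ∀ a b : ↥Rᶜ, a ≤ b ↔ a.1.1 ≤ b.1.1 := fun a b =>
    Iff.trans Subtype.coe_le_coe.symm Fin.le_def
  -- min and max of each component
  have hsupp_ne : ∀ C : ((pathGraph t).induce Rᶜ).ConnectedComponent,
      C.supp.toFinset.Nonempty := by
    intro C
    obtain ⟨v, hv⟩ := C.exists_rep
    exact ⟨v, Set.mem_toFinset.mpr (by rwa [ConnectedComponent.mem_supp_iff])⟩
  set mn : ((pathGraph t).induce Rᶜ).ConnectedComponent → ↥Rᶜ :=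
    fun C => C.supp.toFinset.min' (hsupp_ne C) with hmn
  set mx : ((pathGraph t).induce Rᶜ).ConnectedComponent → ↥Rᶜ :=
    fun C => C.supp.toFinset.max' (hsupp_ne C) with hmx
  have hmn_mem : ∀ C, mn C ∈ C.supp := fun C =>
    Set.mem_toFinset.mp (Finset.min'_mem _ _)
  have hmx_mem : ∀ C, mx C ∈ C.supp := fun C =>
    Set.mem_toFinset.mp (Finset.max'_mem _ _)
  have hmn_le : ∀ C z, z ∈ C.supp → mn C ≤ z := fun C z hz =>
    Finset.min'_le _ _ (Set.mem_toFinset.mpr hz)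
  have hle_mx : ∀ C z, z ∈ C.supp → z ≤ mx C := fun C z hz =>
    Finset.le_max' _ _ (Set.mem_toFinset.mpr hz)
  have hmn_inj : Function.Injective mn := by
    intro C C' h
    have h1 := (ConnectedComponent.mem_supp_iff _ _).mp (hmn_mem C)
    have h2 := (ConnectedComponent.mem_supp_iff _ _).mp (hmn_mem C')
    rw [← h1, ← h2, h]
  -- the set of component minima
  set L : Finset ↥Rᶜ := Finset.univ.image mn with hL
  have hLcard : k + 1 ≤ L.card := by
    rw [hL, Finset.card_image_of_injective _ hmn_inj, Finset.card_univ]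
    exact hcomp
  set N := L.card with hN
  set e := L.orderEmbOfFin (rfl : L.card = N) with he
  have he_mem : ∀ i : Fin N, e i ∈ L := fun i => Finset.orderEmbOfFin_mem L rfl i
  -- each element of L is the minimum of its own component
  have he_min : ∀ i : Fin N,
      mn (((pathGraph t).induce Rᶜ).connectedComponentMk (e i)) = e i := by
    intro i
    obtain ⟨C, -, hC⟩ := Finset.mem_image.mp (he_mem i)
    have : ((pathGraph t).induce Rᶜ).connectedComponentMk (e i) = C := by
      rw [← hC]
      exact (ConnectedComponent.mem_supp_iff _ _).mp (hmn_mem C)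
    rw [this, hC]
  -- interval property of components
  have hint : ∀ (C : ((pathGraph t).induce Rᶜ).ConnectedComponent) (w : Fin t),
      (mn C).1.1 ≤ w.1 → w.1 ≤ (mx C).1.1 →
      ∃ h : w ∈ Rᶜ, ((pathGraph t).induce Rᶜ).connectedComponentMk ⟨w, h⟩ = C := by
    intro C w hw1 hw2
    have hr : ((pathGraph t).induce Rᶜ).Reachable (mn C) (mx C) := by
      rw [← ConnectedComponent.eq]
      rw [(ConnectedComponent.mem_supp_iff _ _).mp (hmn_mem C),
        (ConnectedComponent.mem_supp_iff _ _).mp (hmx_mem C)]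
    obtain ⟨p⟩ := hr
    have hmm : (mn C).1.1 ≤ (mx C).1.1 :=
      (hle_iff _ _).mp (hmn_le C _ (hmx_mem C))
    obtain ⟨x, hx, hreach⟩ := walk_covers p w.1 (by omega) (by omega)
    have hxw : x.1 = w := Fin.ext hx
    refine ⟨hxw ▸ x.2, ?_⟩
    have : (⟨w, hxw ▸ x.2⟩ : ↥Rᶜ) = x := Subtype.ext hxw.symm
    rw [this, ← (ConnectedComponent.mem_supp_iff _ _).mp (hmn_mem C)]
    exact ConnectedComponent.eq.mpr hreach.symm
  -- left boundary: the vertex just before a component minimum is in R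
  have hleft : ∀ (C : ((pathGraph t).induce Rᶜ).ConnectedComponent)
      (h1 : 1 ≤ (mn C).1.1) (h2 : (mn C).1.1 - 1 < t),
      (⟨(mn C).1.1 - 1, h2⟩ : Fin t) ∈ R := by
    intro C h1 h2
    by_contra hcon
    set w : ↥Rᶜ := ⟨⟨(mn C).1.1 - 1, h2⟩, hcon⟩ with hw
    have hadj : ((pathGraph t).induce Rᶜ).Adj w (mn C) := by
      rw [induce_adj_iff]; left; simp [hw]; omega
    have hwsupp : w ∈ C.supp := by
      rw [ConnectedComponent.mem_supp_iff,
        ← (ConnectedComponent.mem_supp_iff _ _).mp (hmn_mem C)]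
      exact ConnectedComponent.sound hadj.reachable
    have := (hle_iff _ _).mp (hmn_le C w hwsupp)
    simp [hw] at this
    omega
  -- right boundary: the vertex just after a component maximum is in R
  have hright : ∀ (C : ((pathGraph t).induce Rᶜ).ConnectedComponent)
      (h2 : (mx C).1.1 + 1 < t),
      (⟨(mx C).1.1 + 1, h2⟩ : Fin t) ∈ R := by
    intro C h2
    by_contra hcon
    set w : ↥Rᶜ := ⟨⟨(mx C).1.1 + 1, h2⟩, hcon⟩ with hw
    have hadj : ((pathGraph t).induce Rᶜ).Adj (mx C) w := by
      rw [induce_adj_iff]; left; simp [hw]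
    have hwsupp : w ∈ C.supp := by
      rw [ConnectedComponent.mem_supp_iff,
        ← (ConnectedComponent.mem_supp_iff _ _).mp (hmx_mem C)]
      exact (ConnectedComponent.sound hadj.reachable).symm
    have := (hle_iff _ _).mp (hle_mx C w hwsupp)
    simp [hw] at this
  -- separation between consecutive components
  have hsep : ∀ i j : Fin N, i < j →
      (mx (((pathGraph t).induce Rᶜ).connectedComponentMk (e i))).1.1 + 2 ≤ (e j).1.1 := by
    intro i j hij
    set Ci := ((pathGraph t).induce Rᶜ).connectedComponentMk (e i) with hCi
    have hmono : (e i).1.1 < (e j).1.1 := by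
      have := e.strictMono hij
      rw [← Subtype.coe_lt_coe, Fin.lt_def] at this
      exact this
    have hne : ((pathGraph t).induce Rᶜ).connectedComponentMk (e j) ≠ Ci := by
      intro hcontra
      have h1 := he_min j
      rw [hcontra, hCi, he_min i] at h1
      have h2 := e.injective h1
      have h3 : i = j := h2
      rw [h3] at hij
      exact lt_irrefl _ hij
    have hgt : (mx Ci).1.1 < (e j).1.1 := by
      by_contra hle
      push_neg at hle
      have hlo : (mn Ci).1.1 ≤ (e j).1.1 := by
        have h4 : mn Ci = e i := by rw [hCi]; exact he_min i
        rw [h4]; omega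
      obtain ⟨hmem, hcomp'⟩ := hint Ci (e j).1 hlo hle
      have : (⟨(e j).1, hmem⟩ : ↥Rᶜ) = e j := Subtype.ext rfl
      rw [this] at hcomp'
      exact hne hcomp'
    rcases Nat.lt_or_ge ((mx Ci).1.1 + 1) ((e j).1.1) with h | h
    · omega
    · exfalso
      have heq : (e j).1.1 = (mx Ci).1.1 + 1 := by omega
      have h2 : (mx Ci).1.1 + 1 < t := heq ▸ (e j).1.isLt
      have hR : (⟨(mx Ci).1.1 + 1, h2⟩ : Fin t) ∈ R := hright Ci h2
      have : (e j).1 = (⟨(mx Ci).1.1 + 1, h2⟩ : Fin t) := Fin.ext heq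
      exact (e j).2 (this ▸ hR)
  -- total versions as functions on ℕ
  set Fn : ℕ → ℕ := fun n => if h : n < N then (e ⟨n, h⟩).1.1 else 0 with hFn
  set Dn : ℕ → ℕ := fun n => if h : n < N then
    (mx (((pathGraph t).induce Rᶜ).connectedComponentMk (e ⟨n, h⟩))).1.1 - (e ⟨n, h⟩).1.1
    else 0 with hDn
  have hmnmx : ∀ i : Fin N, (e i).1.1 ≤
      (mx (((pathGraph t).induce Rᶜ).connectedComponentMk (e i))).1.1 := by
    intro i
    have h1 : mn (((pathGraph t).induce Rᶜ).connectedComponentMk (e i)) = e i := he_min i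
    have := (hle_iff _ _).mp (hmn_le _ _ (hmx_mem
      (((pathGraph t).induce Rᶜ).connectedComponentMk (e i))))
    rwa [h1] at this
  have hstep : ∀ n, n + 1 < N → Fn n + Dn n + 2 ≤ Fn (n + 1) := by
    intro n hn
    have hn' : n < N := by omega
    have := hsep ⟨n, hn'⟩ ⟨n + 1, hn⟩ (by simp [Fin.lt_def])
    have h2 := hmnmx ⟨n, hn'⟩
    simp only [hFn, hDn, dif_pos hn', dif_pos hn]
    omega
  -- telescoping lower bound
  have htel : ∀ j, j < N → 2 * j + ∑ i ∈ Finset.Ico 1 j, Dn i ≤ Fn j := by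
    intro j
    induction j with
    | zero => intro _; simp
    | succ n ih =>
      intro hn
      have hstepn := hstep n hn
      rcases Nat.eq_zero_or_pos n with rfl | hpos
      · have h0 : Fn (0 + 1) = Fn 1 := rfl
        simp only [Finset.Ico_self, Finset.sum_empty]
        omega
      · have hihn := ih (by omega)
        rw [Finset.sum_Ico_succ_top (by omega)]
        omega
  have hkN : k < N := by omega
  have hFk : Fn k ≤ t - 1 := by
    have h1 : (e ⟨k, hkN⟩).1.1 < t := (e ⟨k, hkN⟩).1.isLt
    simp only [hFn, dif_pos hkN]
    omega
  have hsum : 2 * k + ∑ i ∈ Finset.Ico 1 k, Dn i ≤ t - 1 := le_trans (htel k hkN) hFk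
  -- pigeonhole: some middle component is small
  have hex : ∃ i ∈ Finset.Ico 1 k, Dn i + 2 ≤ b := by
    by_contra hcon
    push_neg at hcon
    have hlow : ∀ i ∈ Finset.Ico 1 k, b - 1 ≤ Dn i := by
      intro i hi
      have := hcon i hi
      omega
    have hcard : (Finset.Ico 1 k).card = k - 1 := by simp
    have hsum2 : (k - 1) * (b - 1) ≤ ∑ i ∈ Finset.Ico 1 k, Dn i := by
      calc (k - 1) * (b - 1) = (Finset.Ico 1 k).card • (b - 1) := by rw [hcard]; ring
        _ ≤ ∑ i ∈ Finset.Ico 1 k, Dn i := Finset.card_nsmul_le_sum _ _ _ hlow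
    have hineq : (k - 1) * (b + 1) ≤ t - 3 := by
      have hexp : (k - 1) * (b + 1) = (k - 1) * (b - 1) + 2 * (k - 1) := by
        have : b - 1 + 2 = b + 1 := by omega
        calc (k - 1) * (b + 1) = (k - 1) * (b - 1 + 2) := by rw [this]
          _ = (k - 1) * (b - 1) + 2 * (k - 1) := by ring
      -- need t ≥ 3; follows since b ≥ 2 forces t - 3 ≥ 2(k-1) ≥ 2
      omega
    have : b + 1 ≤ b := by
      rw [hbdef]
      rw [Nat.le_div_iff_mul_le (by omega : 0 < k - 1)]
      calc (b + 1) * (k - 1) = (k - 1) * (b + 1) := by ring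
        _ ≤ t - 3 := hineq
    omega
  obtain ⟨i, hi, hDi⟩ := hex
  rw [Finset.mem_Ico] at hi
  have hiN : i < N := by omega
  set ii : Fin N := ⟨i, hiN⟩ with hii
  set Ci := ((pathGraph t).induce Rᶜ).connectedComponentMk (e ii) with hCi
  set ℓ := (e ii).1.1 with hℓ
  set μ := (mx Ci).1.1 with hμ
  have hℓμ : ℓ ≤ μ := hmnmx ii
  have hDi' : Dn i = μ - ℓ := by simp only [hDn, dif_pos hiN]; rfl
  have hℓ2 : 2 ≤ ℓ := by
    have h1 := htel i hiN
    have h2 : Fn i = ℓ := by simp only [hFn, dif_pos hiN]; rfl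
    omega
  have hμt : μ + 2 ≤ t - 1 := by
    have h1 := hsep ii ⟨k, hkN⟩ (by rw [Fin.lt_def]; exact hi.2)
    rw [← hCi, ← hμ] at h1
    have h2 : (e ⟨k, hkN⟩).1.1 < t := (e ⟨k, hkN⟩).1.isLt
    omega
  have hmnCi : (mn Ci).1.1 = ℓ := by
    have h4 : mn Ci = e ii := by rw [hCi]; exact he_min ii
    rw [h4]
  refine ⟨μ - ℓ + 2, ⟨(ℓ - 1 : ℕ), by omega⟩, ⟨(μ + 1 : ℕ), by omega⟩,
    by omega, by omega, by simp; omega, ?_, ?_, ?_⟩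
  · have hm := hleft Ci (by omega) (by omega)
    convert hm using 2
    omega
  · exact hright Ci (by rw [← hμ]; omega)
  · intro w hw1 hw2
    have hw1' : ℓ - 1 < w.1 := hw1
    have hw2' : w.1 < μ + 1 := hw2
    obtain ⟨hmem, -⟩ := hint Ci w (by omega) (by rw [← hμ]; omega)
    exact fun hR => hmem hR

lemma contains_theta_of_gap {t q b' : ℕ} (hb' : 2 ≤ b') (R : Set (Fin t))
    (a c : Fin t) (hac : a.val + b' = c.val) (ha : a ∈ R) (hc : c ∈ R)
    (hmid : ∀ w : Fin t, a.val < w.val → w.val < c.val → w ∉ R) :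
    ContainsBlowup (pathGraph (b' + 1)) {v : Fin (b' + 1) | v = 0 ∨ v = Fin.last b'} q
      (blowupGraph (pathGraph t) R q) := by
  have hct : c.val < t := c.isLt
  -- the embedded vertex in Fin t
  set wv : Fin (b' + 1) → Fin t := fun v => ⟨a.val + v.val, by
    have := v.isLt; omega⟩ with hwv
  have hmem : ∀ v : Fin (b' + 1), wv v ∈ R ↔ (v = 0 ∨ v = Fin.last b') := by
    intro v
    constructor
    · intro h
      by_contra hcon
      push_neg at hcon
      obtain ⟨h0, hl⟩ := hcon
      have h0' : v.val ≠ 0 := fun hh => h0 (Fin.ext hh)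
      have hl' : v.val ≠ b' := fun hh => hl (Fin.ext hh)
      have := v.isLt
      exact hmid (wv v) (by show a.val < a.val + v.val; omega) (by show a.val + v.val < c.val; omega) h
    · rintro (rfl | rfl)
      · have : wv 0 = a := Fin.ext (by simp [wv])
        rwa [this]
      · have : wv (Fin.last b') = c := Fin.ext (by simp [wv]; omega)
        rwa [this]
  classical
  set f : Fin q → Fin (b' + 1) → (↥R ⊕ (Fin q × ↥Rᶜ)) := fun i v =>
    if h : wv v ∈ R then Sum.inl ⟨wv v, h⟩ else Sum.inr (i, ⟨wv v, h⟩) with hf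
  have hproj : ∀ i v, blowupProj R q (f i v) = wv v := by
    intro i v
    by_cases h : wv v ∈ R <;> simp [f, h, blowupProj]
  have hcopy : ∀ i v, blowupInCopy R q i (f i v) := by
    intro i v
    by_cases h : wv v ∈ R <;> simp [f, h, blowupInCopy]
  refine ⟨fun i => ⟨f i, ?_⟩, ?_⟩
  · intro u v huv
    rw [pathGraph_adj] at huv
    refine ⟨i, hcopy i u, hcopy i v, ?_⟩
    rw [hproj, hproj, pathGraph_adj]
    simp only [wv]
    omega
  · intro i j x y
    constructor
    · intro h
      change f i x = f j y at h
      by_cases hx : wv x ∈ R <;> by_cases hy : wv y ∈ R <;>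
        simp only [f, hx, hy, dif_pos, dif_neg, not_false_iff] at h
      · -- both inl
        have hxy : wv x = wv y := congrArg Subtype.val (Sum.inl.inj h)
        have : x = y := by
          have := congrArg Fin.val hxy
          simp only [wv] at this
          exact Fin.ext (by omega)
        exact ⟨this, Or.inr ((hmem x).mp hx)⟩
      · exact absurd h (by simp)
      · exact absurd h (by simp)
      · have h2 := Sum.inr.inj h
        have hij : i = j := congrArg Prod.fst h2
        have hxy : wv x = wv y := congrArg Subtype.val (congrArg Prod.snd h2)
        have : x = y := by
          have := congrArg Fin.val hxy
          simp only [wv] at this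
          exact Fin.ext (by omega)
        exact ⟨this, Or.inl hij⟩
    · rintro ⟨rfl, (rfl | hx)⟩
      · rfl
      · have hxR : wv x ∈ R := (hmem x).mpr hx
        change f i x = f j x
        simp [f, hxR]

/-- Let `b := ⌊(t−3)/(k−1)⌋ ≥ 2`. Every graph `(P_t)_R^q` with `R ⊊ V(P_t)` such that
`P_t − R` has at least `k+1` connected components contains a theta graph `θ_{q,b'}`
(which is `(P_{b'+1})` blown up `q` times over its two endpoints) for some `2 ≤ b' ≤ b`. -/
theorem family_member_contains_theta (t k q : ℕ) (ht : 3 ≤ t) (hk : 2 ≤ k) (hq : 1 ≤ q)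
    (hb : 2 ≤ (t - 3) / (k - 1))
    (R : Set (Fin t)) (hR : R ≠ Set.univ)
    (hcomp : k + 1 ≤ Nat.card ((pathGraph t).induce Rᶜ).ConnectedComponent) :
    ∃ b' : ℕ, 2 ≤ b' ∧ b' ≤ (t - 3) / (k - 1) ∧
      ContainsBlowup (pathGraph (b' + 1)) {v : Fin (b' + 1) | v = 0 ∨ v = Fin.last b'} q
        (blowupGraph (pathGraph t) R q) := by
  obtain ⟨b', a, c, h1, h2, h3, h4, h5, h6⟩ := exists_gap t k hk hb R hcomp
  exact ⟨b', h1, h2, contains_theta_of_gap h1 R a c h3 h4 h5 h6⟩
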